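/- Let X, Y be finite sets, P a distribution on X, W a channel from X to Y, S ⊆ X × Y, and define W_x^S, W_P^S, s(W_P^S) and D_max as above. Fix ε ∈ (0,1/2] and L ≥ e^{D_max} · ln|Y| / ε². Suppose a sequence x_1,...,x_L ∈ X satisfies, for every y ∈ s(W_P^S), Σ_{l=1}^L (W_{x_l}^S(y)/W_P^S(y))·e^{-D_max} ≥ (1-ε)·L·e^{-D_max} - ln|s(W_P^S)|/ε. Then letting W_C^S(y) = (1/L)·Σ_{l=1}^L W_{x_l}^S(y), for every y ∈ Y: W_P^S(y) - W_C^S(y) ≤ 2ε·W_P^S(y). -/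
import Mathlib


open Finset Classical in
/-- Codebook performance: the truncated codebook output distribution dominates
`(1-2ε)` times the truncated target output distribution pointwise. -/
theorem channel_resolvability_performance {X Y : Type*} [Fintype X] [Fintype Y]
    (P : X → ℝ) (hP0 : ∀ x, 0 ≤ P x) (hP1 : ∑ x : X, P x = 1)
    (W : X → Y → ℝ) (hW0 : ∀ x y, 0 ≤ W x y) (hW1 : ∀ x, ∑ y : Y, W x y = 1)
    (S : Finset (X × Y))
    (WxS : X → Y → ℝ) (hWxS : ∀ x y, WxS x y = if (x, y) ∈ S then W x y else 0)
    (WPS : Y → ℝ) (hWPS : ∀ y, WPS y = ∑ x : X, P x * WxS x y)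
    (Dmax : ℝ)
    (hD : IsGreatest {r : ℝ | ∃ x y, (x, y) ∈ S ∧ 0 < WPS y ∧
            r = Real.log (WxS x y / WPS y)} Dmax)
    (ε : ℝ) (hε0 : 0 < ε) (hε1 : ε ≤ 1/2)
    (L : ℕ) (hLpos : 0 < L)
    (hL : (L : ℝ) ≥ Real.exp Dmax * Real.log (Fintype.card Y) / ε ^ 2)
    (xl : Fin L → X)
    (hcost : ∀ y, 0 < WPS y →
      ∑ l : Fin L, WxS (xl l) y / WPS y * Real.exp (-Dmax) ≥
        (1 - ε) * L * Real.exp (-Dmax) -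
          Real.log (Fintype.card {y : Y // 0 < WPS y}) / ε)
    (WCS : Y → ℝ) (hWCS : ∀ y, WCS y = (1 / (L : ℝ)) * ∑ l : Fin L, WxS (xl l) y) :
    ∀ y : Y, WPS y - WCS y ≤ 2 * ε * WPS y := by
  intro y
  have hWxS0 : ∀ x y, 0 ≤ WxS x y := by
    intro x y
    rw [hWxS]
    split
    · exact hW0 x y
    · exact le_refl 0
  have hWPS0 : 0 ≤ WPS y := by
    rw [hWPS]
    exact Finset.sum_nonneg fun x _ => mul_nonneg (hP0 x) (hWxS0 x y)
  have hL0 : (0:ℝ) < (L:ℝ) := by exact_mod_cast hLpos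
  have hWCS0 : 0 ≤ WCS y := by
    rw [hWCS]
    exact mul_nonneg (by positivity) (Finset.sum_nonneg fun l _ => hWxS0 _ y)
  rcases eq_or_lt_of_le hWPS0 with h0 | hpos
  · rw [← h0]; linarith
  · have hc := hcost y hpos
    set w := WPS y with hw
    set Ssum := ∑ l : Fin L, WxS (xl l) y with hS
    have hsum : ∑ l : Fin L, WxS (xl l) y / w * Real.exp (-Dmax)
        = Ssum / w * Real.exp (-Dmax) := by
      rw [← Finset.sum_mul, ← Finset.sum_div]
    rw [hsum] at hc
    have hexp : (0:ℝ) < Real.exp (-Dmax) := Real.exp_pos _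
    have hexpD : (0:ℝ) < Real.exp Dmax := Real.exp_pos _
    have hee : Real.exp (-Dmax) * Real.exp Dmax = 1 := by
      rw [← Real.exp_add]; simp
    have hcard1 : (1:ℝ) ≤ (Fintype.card {y : Y // 0 < WPS y} : ℝ) := by
      have : Nonempty {y : Y // 0 < WPS y} := ⟨⟨y, hpos⟩⟩
      exact_mod_cast Fintype.card_pos
    have hcard2 : (Fintype.card {y : Y // 0 < WPS y} : ℝ) ≤ (Fintype.card Y : ℝ) := by
      exact_mod_cast Fintype.card_subtype_le _
    have hlog : Real.log (Fintype.card {y : Y // 0 < WPS y}) ≤ Real.log (Fintype.card Y) :=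
      Real.log_le_log (by linarith) hcard2
    -- from hL : L ≥ exp Dmax * log |Y| / ε^2, get exp Dmax * log |Y| ≤ ε^2 * L
    have hL' : Real.exp Dmax * Real.log (Fintype.card Y) ≤ ε ^ 2 * L := by
      have := (div_le_iff₀ (by positivity : (0:ℝ) < ε ^ 2)).mp hL
      linarith [this]
    -- key: Ssum / w ≥ (1 - 2ε) * L
    have hKey : Ssum / w ≥ (1 - 2 * ε) * L := by
      -- multiply hc by exp Dmax
      have h1 : Ssum / w ≥ (1 - ε) * L -
          Real.log (Fintype.card {y : Y // 0 < WPS y}) / ε * Real.exp Dmax := by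
        have := mul_le_mul_of_nonneg_right hc.le (le_of_lt hexpD)
        calc (1 - ε) * L - Real.log (Fintype.card {y : Y // 0 < WPS y}) / ε * Real.exp Dmax
            = ((1 - ε) * L * Real.exp (-Dmax) -
                Real.log (Fintype.card {y : Y // 0 < WPS y}) / ε) * Real.exp Dmax := by
              linear_combination (ε * (L:ℝ) - (L:ℝ)) * hee
          _ ≤ Ssum / w * Real.exp (-Dmax) * Real.exp Dmax := this
          _ = Ssum / w := by rw [mul_assoc, hee, mul_one]
      have h2 : Real.log (Fintype.card {y : Y // 0 < WPS y}) / ε * Real.exp Dmax ≤ ε * L := by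
        rw [div_mul_eq_mul_div, div_le_iff₀ hε0]
        nlinarith [hlog, hexpD.le, hL']
      linarith
    have hSsum : Ssum ≥ (1 - 2 * ε) * L * w := by
      have := mul_le_mul_of_nonneg_right hKey (le_of_lt hpos)
      rwa [div_mul_cancel₀ _ (ne_of_gt hpos)] at this
    rw [hWCS]
    rw [← hS]
    have : (1 - 2 * ε) * w ≤ 1 / (L:ℝ) * Ssum := by
      rw [one_div, inv_mul_eq_div, le_div_iff₀ hL0]
      nlinarith [hSsum]
    linarith
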